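/- Fix y ∈ {−1, +1} and ν > 0, and define Ψ₀(m) = ∫ 2·max(0, 1 − yη) φ(η; m, ν²) dη. Then for every m ∈ ℝ, the second derivative of Ψ₀ with respect to m equals 2 φ(1; ym, ν²). -/

import Mathlib

open MeasureTheory Real Filter Topology

/-- Gaussian density with mean `m` and variance `ν ^ 2`, evaluated at `x`:
`φ(x; m, ν²) = (2πν²)^{-1/2} exp(−(x−m)²/(2ν²))`. -/
noncomputable def gpdf (m ν x : ℝ) : ℝ :=
  (Real.sqrt (2 * Real.pi * ν ^ 2))⁻¹ * Real.exp (-((x - m) ^ 2) / (2 * ν ^ 2))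

/-- Gaussian cumulative distribution function with mean `m` and variance `ν ^ 2`:
`Φ(c; m, ν²) = ∫_{−∞}^{c} φ(η; m, ν²) dη`. -/
noncomputable def gcdf (m ν c : ℝ) : ℝ := ∫ x in Set.Iio c, gpdf m ν x

section aux

variable {ν : ℝ}

lemma gpdf_eq (hν : 0 < ν) (μ x : ℝ) :
    gpdf μ ν x = (Real.sqrt (2 * Real.pi * ν ^ 2))⁻¹ *
      Real.exp (-((2 * ν ^ 2)⁻¹) * (x - μ) ^ 2) := by
  have h : -((x - μ) ^ 2) / (2 * ν ^ 2) = -((2 * ν ^ 2)⁻¹) * (x - μ) ^ 2 := by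
    field_simp
  rw [gpdf, h]

lemma hb_pos (hν : 0 < ν) : (0 : ℝ) < (2 * ν ^ 2)⁻¹ := by positivity

lemma integrable_gpdf (hν : 0 < ν) (μ : ℝ) : Integrable (gpdf μ ν) := by
  have h := ((integrable_exp_neg_mul_sq (hb_pos hν)).comp_sub_right μ).const_mul
    ((Real.sqrt (2 * Real.pi * ν ^ 2))⁻¹)
  refine h.congr ?_
  filter_upwards with x
  rw [gpdf_eq hν]

lemma integrable_sub_mul_gpdf (hν : 0 < ν) (μ : ℝ) :
    Integrable (fun x => (x - μ) * gpdf μ ν x) := by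
  have h := ((integrable_mul_exp_neg_mul_sq (hb_pos hν)).comp_sub_right μ).const_mul
    ((Real.sqrt (2 * Real.pi * ν ^ 2))⁻¹)
  refine h.congr ?_
  filter_upwards with x
  rw [gpdf_eq hν]
  ring

lemma continuous_gpdf (μ : ℝ) : Continuous (gpdf μ ν) := by
  unfold gpdf
  fun_prop

lemma hasDerivAt_gpdf (hν : 0 < ν) (μ x : ℝ) :
    HasDerivAt (fun t => gpdf μ ν t) (-((x - μ) / ν ^ 2) * gpdf μ ν x) x := by
  have h0 : HasDerivAt (fun t : ℝ => -((t - μ) ^ 2) / (2 * ν ^ 2))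
      (-((2 : ℕ) * (x - μ) ^ (2 - 1) * 1) / (2 * ν ^ 2)) x :=
    (((hasDerivAt_id x).sub_const μ).pow 2).neg.div_const _
  have h1 := (h0.exp).const_mul ((Real.sqrt (2 * Real.pi * ν ^ 2))⁻¹)
  have hne : ν ≠ 0 := ne_of_gt hν
  convert h1 using 1
  any_goals rfl
  rw [gpdf]
  field_simp
  ring

lemma tendsto_gpdf_atBot (hν : 0 < ν) (μ : ℝ) :
    Tendsto (fun x => gpdf μ ν x) atBot (𝓝 0) := by
  have h1 : Tendsto (fun x : ℝ => x - μ) atBot atBot :=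
    (tendsto_atBot_add_const_right _ (-μ) tendsto_id).congr fun x => by
      simp [sub_eq_add_neg]
  have h2 : Tendsto (fun x : ℝ => (x - μ) ^ 2) atBot atTop := by
    have := (tendsto_pow_atTop (two_ne_zero)).comp (tendsto_abs_atBot_atTop.comp h1)
    refine this.congr fun x => ?_
    simp [sq_abs]
  have h3 : Tendsto (fun x : ℝ => -((x - μ) ^ 2) / (2 * ν ^ 2)) atBot atBot := by
    have := (h2.atTop_div_const (by positivity : (0:ℝ) < 2 * ν ^ 2))
    rw [← tendsto_neg_atTop_iff]
    refine this.congr fun x => ?_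
    ring
  have h4 := (Real.tendsto_exp_atBot.comp h3).const_mul ((Real.sqrt (2 * Real.pi * ν ^ 2))⁻¹)
  rw [mul_zero] at h4
  exact h4.congr fun x => by simp [gpdf, Function.comp]

lemma integral_Iio_sub_mul (hν : 0 < ν) (μ c : ℝ) :
    ∫ x in Set.Iio c, (x - μ) * gpdf μ ν x = -ν ^ 2 * gpdf μ ν c := by
  rw [← integral_Iic_eq_integral_Iio]
  have hne : ν ≠ 0 := ne_of_gt hν
  have hderiv : ∀ x ∈ Set.Iic c, HasDerivAt (fun t => -ν ^ 2 * gpdf μ ν t)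
      ((x - μ) * gpdf μ ν x) x := by
    intro x _
    have := (hasDerivAt_gpdf hν μ x).const_mul (-ν ^ 2)
    convert this using 1
    any_goals rfl
    field_simp
  have hint : IntegrableOn (fun x => (x - μ) * gpdf μ ν x) (Set.Iic c) :=
    (integrable_sub_mul_gpdf hν μ).integrableOn
  have htend : Tendsto (fun t => -ν ^ 2 * gpdf μ ν t) atBot (𝓝 0) := by
    have := (tendsto_gpdf_atBot hν μ).const_mul (-ν ^ 2)
    rwa [mul_zero] at this
  rw [MeasureTheory.integral_Iic_of_hasDerivAt_of_tendsto' hderiv hint htend, sub_zero]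

lemma key_formula (hν : 0 < ν) (μ : ℝ) :
    (∫ η, 2 * max 0 (1 - η) * gpdf μ ν η)
      = 2 * (1 - μ) * gcdf μ ν 1 + 2 * ν ^ 2 * gpdf μ ν 1 := by
  have heq : (fun η => 2 * max 0 (1 - η) * gpdf μ ν η)
      = Set.indicator (Set.Iio 1)
        (fun η => 2 * (1 - μ) * gpdf μ ν η - 2 * ((η - μ) * gpdf μ ν η)) := by
    funext η
    by_cases h : η < 1
    · rw [Set.indicator_of_mem (by exact h)]
      rw [max_eq_right (by linarith)]
      ring
    · rw [Set.indicator_of_notMem (by simpa using h)]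
      rw [max_eq_left (by push_neg at h; linarith)]
      ring
  rw [heq, integral_indicator measurableSet_Iio]
  have h1 : IntegrableOn (fun η => 2 * (1 - μ) * gpdf μ ν η) (Set.Iio 1) :=
    ((integrable_gpdf hν μ).const_mul _).integrableOn
  have h2 : IntegrableOn (fun η => 2 * ((η - μ) * gpdf μ ν η)) (Set.Iio 1) :=
    ((integrable_sub_mul_gpdf hν μ).const_mul _).integrableOn
  rw [MeasureTheory.integral_sub h1 h2, MeasureTheory.integral_const_mul,
    MeasureTheory.integral_const_mul, integral_Iio_sub_mul hν μ 1]
  rw [gcdf]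
  ring

lemma gpdf_neg (μ x : ℝ) : gpdf (-μ) ν (-x) = gpdf μ ν x := by
  have h : (-x - -μ) ^ 2 = (x - μ) ^ 2 := by ring
  rw [gpdf, gpdf, h]

lemma psi_eq (y : ℝ) (hy : y = -1 ∨ y = 1) (hν : 0 < ν) (m' : ℝ) :
    (∫ η, 2 * max 0 (1 - y * η) * gpdf m' ν η)
      = 2 * (1 - y * m') * gcdf (y * m') ν 1 + 2 * ν ^ 2 * gpdf (y * m') ν 1 := by
  rcases hy with rfl | rfl
  · have hcomp : (fun η => 2 * max 0 (1 - (-1) * η) * gpdf m' ν η)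
        = fun η => (fun t => 2 * max 0 (1 - t) * gpdf (-m') ν t) (-η) := by
      funext η
      simp only [neg_mul, one_mul, sub_neg_eq_add, neg_neg]
      rw [← gpdf_neg m' η]
    calc (∫ η, 2 * max 0 (1 - (-1) * η) * gpdf m' ν η)
        = ∫ η, (fun t => 2 * max 0 (1 - t) * gpdf (-m') ν t) (-η) := by rw [hcomp]
      _ = ∫ η, 2 * max 0 (1 - η) * gpdf (-m') ν η := by
          exact MeasureTheory.integral_neg_eq_self
            (fun t => 2 * max 0 (1 - t) * gpdf (-m') ν t) volume
      _ = 2 * (1 - (-1) * m') * gcdf ((-1) * m') ν 1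
            + 2 * ν ^ 2 * gpdf ((-1) * m') ν 1 := by
          rw [key_formula hν (-m')]; norm_num
  · simpa using key_formula hν m'

lemma gpdf_symm (μ x : ℝ) : gpdf μ ν x = gpdf x ν μ := by
  have h : (x - μ) ^ 2 = (μ - x) ^ 2 := by ring
  rw [gpdf, gpdf, h]

lemma gcdf_shift (hν : 0 < ν) (μ : ℝ) : gcdf μ ν 1 = gcdf 0 ν (1 - μ) := by
  have h1 : (fun x => Set.indicator (Set.Iio 1) (gpdf μ ν) x)
      = fun x => Set.indicator (Set.Iio (1 - μ)) (gpdf 0 ν) (x - μ) := by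
    funext x
    by_cases h : x < 1
    · rw [Set.indicator_of_mem (by exact h),
        Set.indicator_of_mem (by simp only [Set.mem_Iio]; linarith)]
      rw [gpdf, gpdf]
      ring_nf
    · rw [Set.indicator_of_notMem (by simpa using h),
        Set.indicator_of_notMem (by simp only [Set.mem_Iio]; push_neg at h ⊢; linarith)]
  rw [gcdf, gcdf, ← integral_indicator measurableSet_Iio, h1,
    MeasureTheory.integral_sub_right_eq_self
      (fun x => Set.indicator (Set.Iio (1 - μ)) (gpdf 0 ν) x) μ,
    integral_indicator measurableSet_Iio]

lemma hasDerivAt_gcdf0 (hν : 0 < ν) (t : ℝ) :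
    HasDerivAt (fun t => gcdf 0 ν t) (gpdf 0 ν t) t := by
  have hint : Integrable (gpdf 0 ν) := integrable_gpdf hν 0
  have hrep : (fun t => gcdf 0 ν t)
      = fun t => (∫ x in Set.Iic (0:ℝ), gpdf 0 ν x) + ∫ x in (0:ℝ)..t, gpdf 0 ν x := by
    funext t
    rw [gcdf, ← integral_Iic_eq_integral_Iio,
      ← intervalIntegral.integral_Iic_sub_Iic hint.integrableOn hint.integrableOn]
    ring
  rw [hrep]
  exact (intervalIntegral.integral_hasDerivAt_right hint.intervalIntegrable
    ((continuous_gpdf 0).stronglyMeasurableAtFilter _ _)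
    (continuous_gpdf 0).continuousAt).const_add _

lemma hasDerivAt_gcdf_mean (hν : 0 < ν) (μ : ℝ) :
    HasDerivAt (fun μ => gcdf μ ν 1) (-(gpdf μ ν 1)) μ := by
  have hrep : (fun μ => gcdf μ ν 1) = fun μ => gcdf 0 ν (1 - μ) :=
    funext fun μ => gcdf_shift hν μ
  rw [hrep]
  have hinner : HasDerivAt (fun μ : ℝ => 1 - μ) (-1) μ := by
    simpa using ((hasDerivAt_id μ).const_sub 1)
  have := (hasDerivAt_gcdf0 hν (1 - μ)).comp μ hinner
  have hval : gpdf 0 ν (1 - μ) = gpdf μ ν 1 := by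
    have h : (1 - μ - 0) ^ 2 = (1 - μ) ^ 2 := by ring
    rw [gpdf, gpdf, h]
  rw [hval] at this
  simp only [mul_neg, mul_one] at this
  exact this

lemma hasDerivAt_gpdf_mean (hν : 0 < ν) (μ : ℝ) :
    HasDerivAt (fun μ => gpdf μ ν 1) ((1 - μ) / ν ^ 2 * gpdf μ ν 1) μ := by
  have hrep : (fun μ => gpdf μ ν 1) = fun μ => gpdf 1 ν μ := funext fun μ => gpdf_symm μ 1
  rw [hrep]
  have := hasDerivAt_gpdf hν 1 μ
  convert this using 1
  rw [gpdf_symm μ 1]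
  ring

lemma hasDerivAt_F (hν : 0 < ν) (μ : ℝ) :
    HasDerivAt (fun μ => 2 * (1 - μ) * gcdf μ ν 1 + 2 * ν ^ 2 * gpdf μ ν 1)
      (-2 * gcdf μ ν 1) μ := by
  have hne : ν ≠ 0 := ne_of_gt hν
  have h1 : HasDerivAt (fun μ : ℝ => 2 * (1 - μ)) (-2) μ := by
    simpa using (((hasDerivAt_id μ).const_sub 1).const_mul 2)
  have h2 := h1.mul (hasDerivAt_gcdf_mean hν μ)
  have h3 := (hasDerivAt_gpdf_mean hν μ).const_mul (2 * ν ^ 2)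
  have h4 := h2.add h3
  convert h4 using 1
  any_goals rfl
  field_simp
  ring

end aux

theorem svc_Psi2 (y ν : ℝ) (hy : y = -1 ∨ y = 1) (hν : 0 < ν) (m : ℝ) :
    HasDerivAt (deriv (fun m' => ∫ η, 2 * max 0 (1 - y * η) * gpdf m' ν η))
      (2 * gpdf (y * m) ν 1) m := by
  have hrep : (fun m' => ∫ η, 2 * max 0 (1 - y * η) * gpdf m' ν η)
      = fun m' => 2 * (1 - y * m') * gcdf (y * m') ν 1 + 2 * ν ^ 2 * gpdf (y * m') ν 1 :=
    funext fun m' => psi_eq y hy hν m'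
  have hy2 : y * y = 1 := by rcases hy with rfl | rfl <;> norm_num
  have hinner : ∀ m' : ℝ, HasDerivAt (fun m' : ℝ => y * m') y m' := by
    intro m'
    simpa using (hasDerivAt_id m').const_mul y
  have hΨ : ∀ m' : ℝ, HasDerivAt
      (fun m' => 2 * (1 - y * m') * gcdf (y * m') ν 1 + 2 * ν ^ 2 * gpdf (y * m') ν 1)
      (-2 * gcdf (y * m') ν 1 * y) m' := by
    intro m'
    exact (hasDerivAt_F hν (y * m')).comp m' (hinner m')
  have hderiv_eq : deriv (fun m' => ∫ η, 2 * max 0 (1 - y * η) * gpdf m' ν η)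
      = fun m' => -2 * gcdf (y * m') ν 1 * y := by
    rw [hrep]
    funext m'
    exact (hΨ m').deriv
  rw [hderiv_eq]
  have hD := (((hasDerivAt_gcdf_mean hν (y * m)).comp m (hinner m)).const_mul (-2)).mul_const y
  have hval : -2 * (-gpdf (y * m) ν 1 * y) * y = 2 * gpdf (y * m) ν 1 := by
    linear_combination (2 * gpdf (y * m) ν 1) * hy2
  rw [← hval]
  exact hD
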